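/- Let K be a non-degenerate chainable continuum and let x ∈ K be an endpoint of K. Then x is not contained in any non-degenerate arc of K if and only if there exists a nested decreasing sequence (H_i)_{i∈ℕ} of non-degenerate subcontinua of K with ⋂_{i∈ℕ} H_i = {x} such that H_i is not arc-connected for all sufficiently large i. -/

import Mathlib

open Set Filter Topology

/-- A subset of a topological space is an arc if it is the image of `[0,1]` under a
topological embedding.  (In particular every arc is non-degenerate.) -/
def IsArc {Z : Type*} [TopologicalSpace Z] (A : Set Z) : Prop :=
  ∃ f : Set.Icc (0:ℝ) 1 → Z, Topology.IsEmbedding f ∧ Set.range f = A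

/-- A point `x` of a (chainable) continuum is an endpoint if for any two subcontinua
`A`, `B` containing `x`, either `A ⊆ B` or `B ⊆ A`. -/
def IsEndpointPt {Z : Type*} [TopologicalSpace Z] (x : Z) : Prop :=
  ∀ A B : Set Z, IsCompact A → IsConnected A → IsCompact B → IsConnected B →
    x ∈ A → x ∈ B → A ⊆ B ∨ B ⊆ A

/-- A set is arc-connected if any two distinct points of it are joined by an arc inside it. -/
def ArcConnectedSet {Z : Type*} [TopologicalSpace Z] (S : Set Z) : Prop :=
  ∀ a ∈ S, ∀ b ∈ S, a ≠ b → ∃ A : Set Z, IsArc A ∧ A ⊆ S ∧ a ∈ A ∧ b ∈ A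

/-- Boundary bumping (weak form): in a compact connected T2 space, the connected
component of `x` in a closed subset `F` with nonempty complement meets `closure Fᶜ`. -/
lemma bump_aux {K : Type*} [TopologicalSpace K] [CompactSpace K] [T2Space K]
    [PreconnectedSpace K] {F : Set K} (hF : IsClosed F) {x : K} (hx : x ∈ F)
    (hne : Fᶜ.Nonempty) : (connectedComponentIn F x ∩ closure Fᶜ).Nonempty := by
  by_contra hcon
  rw [not_nonempty_iff_eq_empty] at hcon
  haveI : CompactSpace F := isCompact_iff_compactSpace.mp hF.isCompact
  set x₀ : F := ⟨x, hx⟩ with hx₀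
  have hC : connectedComponentIn F x = Subtype.val '' connectedComponent x₀ :=
    connectedComponentIn_eq_image hx
  set B' : Set F := Subtype.val ⁻¹' (closure Fᶜ) with hB'
  have hB'comp : IsCompact B' :=
    (isClosed_closure.preimage continuous_subtype_val).isCompact
  have hdisj : ∀ z : F, z ∈ connectedComponent x₀ → z ∉ B' := by
    intro z hz hz2
    have : (z : K) ∈ connectedComponentIn F x ∩ closure Fᶜ :=
      ⟨hC ▸ ⟨z, hz, rfl⟩, hz2⟩
    rw [hcon] at this
    exact this
  have hcover : B' ⊆ ⋃ s : { s : Set F // IsClopen s ∧ x₀ ∈ s }, (↑s)ᶜ := by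
    intro z hz
    by_contra h
    simp only [mem_iUnion, mem_compl_iff, not_exists, not_not] at h
    have hzc : z ∈ connectedComponent x₀ := by
      rw [connectedComponent_eq_iInter_isClopen x₀]
      exact mem_iInter.mpr fun s => h s
    exact hdisj z hzc hz
  obtain ⟨t, ht⟩ := hB'comp.elim_finite_subcover
    (fun s : { s : Set F // IsClopen s ∧ x₀ ∈ s } => (↑s : Set F)ᶜ)
    (fun s => s.2.1.compl.isOpen) hcover
  set Z : Set F := ⋂ s ∈ t, (s : Set F) with hZ
  have hZclopen : IsClopen Z := isClopen_biInter_finset fun s _ => s.2.1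
  have hxZ : x₀ ∈ Z := mem_iInter₂.mpr fun s _ => s.2.2
  have hZB' : ∀ z : F, z ∈ Z → z ∉ B' := by
    intro z hz hzB
    obtain ⟨s, hs, hsz⟩ := mem_iUnion₂.mp (ht hzB)
    exact hsz (mem_iInter₂.mp hz s hs)
  set U : Set K := Subtype.val '' Z with hU
  have hUclosed : IsClosed U :=
    (hZclopen.isClosed.isCompact.image continuous_subtype_val).isClosed
  have hUopen : IsOpen U := by
    rw [isOpen_iff_mem_nhds]
    rintro u ⟨z, hzZ, rfl⟩
    obtain ⟨O, hO, hOZ⟩ := isOpen_induced_iff.mp hZclopen.isOpen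
    have hz_not_cl : (z : K) ∉ closure Fᶜ := hZB' z hzZ
    have hV : IsOpen (O ∩ (closure Fᶜ)ᶜ) := hO.inter isClosed_closure.isOpen_compl
    have hzV : (z : K) ∈ O ∩ (closure Fᶜ)ᶜ := by
      refine ⟨?_, hz_not_cl⟩
      have : z ∈ Subtype.val ⁻¹' O := hOZ ▸ hzZ
      exact this
    refine mem_of_superset (hV.mem_nhds hzV) ?_
    rintro w ⟨hwO, hwcl⟩
    have hwF : w ∈ F := by
      by_contra hwF
      exact hwcl (subset_closure hwF)
    refine ⟨⟨w, hwF⟩, ?_, rfl⟩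
    rw [← hOZ]
    exact hwO
  have := isClopen_iff.mp ⟨hUclosed, hUopen⟩
  rcases this with h | h
  · have hxU : x ∈ U := ⟨x₀, hxZ, rfl⟩
    rw [h] at hxU
    exact hxU
  · obtain ⟨w, hw⟩ := hne
    have : w ∈ U := h ▸ mem_univ w
    obtain ⟨z, _, rfl⟩ := this
    exact hw z.2

/-- In a compact space the connected component of a point in a closed set is compact. -/
lemma isCompact_connectedComponentIn {K : Type*} [TopologicalSpace K] [CompactSpace K]
    [T2Space K] {F : Set K} (hF : IsClosed F) {x : K} (hx : x ∈ F) :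
    IsCompact (connectedComponentIn F x) := by
  haveI : CompactSpace F := isCompact_iff_compactSpace.mp hF.isCompact
  rw [connectedComponentIn_eq_image hx]
  exact (isClosed_connectedComponent.isCompact).image continuous_subtype_val

/-- The image of a nondegenerate closed subinterval under an embedding of `[0,1]` is an arc. -/
lemma isArc_image_Icc {K : Type*} [TopologicalSpace K] [T2Space K]
    {f : Set.Icc (0:ℝ) 1 → K} (hf : Topology.IsEmbedding f)
    (p q : Set.Icc (0:ℝ) 1) (hpq : (p : ℝ) < q) :
    IsArc (f '' Set.Icc p q) := by
  haveI : CompactSpace (Set.Icc (p:ℝ) (q:ℝ)) :=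
    isCompact_iff_compactSpace.mp isCompact_Icc
  set e := iccHomeoI (p : ℝ) (q : ℝ) hpq with he
  set ι : Set.Icc (p:ℝ) (q:ℝ) → Set.Icc (0:ℝ) 1 :=
    fun t => ⟨t.1, ⟨le_trans p.2.1 t.2.1, le_trans t.2.2 q.2.2⟩⟩ with hι
  have hιcont : Continuous ι := Continuous.subtype_mk continuous_subtype_val _
  have hιinj : Function.Injective ι := by
    intro s t hst
    have h2 : (ι s : ℝ) = (ι t : ℝ) := congrArg Subtype.val hst
    exact Subtype.ext (show (s:ℝ) = t from h2)
  have hιemb : Topology.IsEmbedding ι :=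
    (hιcont.isClosedEmbedding hιinj).isEmbedding
  refine ⟨f ∘ ι ∘ e.symm, hf.comp (hιemb.comp e.symm.isEmbedding), ?_⟩
  have hrange : Set.range (ι ∘ e.symm) = Set.Icc p q := by
    rw [Set.range_comp, e.symm.surjective.range_eq, Set.image_univ]
    ext t
    constructor
    · rintro ⟨u, rfl⟩
      exact ⟨Subtype.coe_le_coe.mp u.2.1, Subtype.coe_le_coe.mp u.2.2⟩
    · intro ht
      exact ⟨⟨(t : ℝ), ⟨Subtype.coe_le_coe.mpr ht.1, Subtype.coe_le_coe.mpr ht.2⟩⟩,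
        Subtype.ext rfl⟩
  calc Set.range (f ∘ (ι ∘ e.symm)) = f '' Set.range (ι ∘ e.symm) := by
        rw [Set.range_comp]
    _ = f '' Set.Icc p q := by rw [hrange]

/-- A connected subset of an arc is arc-connected. -/
lemma arcConnected_of_subset_arc {K : Type*} [TopologicalSpace K] [T2Space K]
    {f : Set.Icc (0:ℝ) 1 → K} (hf : Topology.IsEmbedding f)
    {S : Set K} (hS : IsPreconnected S) (hSr : S ⊆ Set.range f) :
    ArcConnectedSet S := by
  intro a ha b hb hab
  obtain ⟨p, hp⟩ := hSr ha
  obtain ⟨q, hq⟩ := hSr hb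
  have hT : IsPreconnected (f ⁻¹' S) := by
    have himg : f '' (f ⁻¹' S) = S := by
      rw [Set.image_preimage_eq_inter_range, Set.inter_eq_left.mpr hSr]
    apply hf.isInducing.isPreconnected_image.mp
    rw [himg]
    exact hS
  have hT' : IsPreconnected (Subtype.val '' (f ⁻¹' S) : Set ℝ) :=
    Topology.IsInducing.subtypeVal.isPreconnected_image.mpr hT
  have hord := hT'.ordConnected
  have key : ∀ u v : Set.Icc (0:ℝ) 1, f u ∈ S → f v ∈ S →
      Set.Icc u v ⊆ f ⁻¹' S := by
    intro u v hu hv t ht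
    have h1 : (u : ℝ) ∈ Subtype.val '' (f ⁻¹' S) := ⟨u, hu, rfl⟩
    have h2 : (v : ℝ) ∈ Subtype.val '' (f ⁻¹' S) := ⟨v, hv, rfl⟩
    have : (t : ℝ) ∈ Subtype.val '' (f ⁻¹' S) :=
      hord.out h1 h2 ⟨Subtype.coe_le_coe.mpr ht.1, Subtype.coe_le_coe.mpr ht.2⟩
    obtain ⟨t', ht', htt⟩ := this
    rwa [show t = t' from Subtype.ext htt.symm]
  have hpq : p ≠ q := fun h => hab (by rw [← hp, ← hq, h])
  rcases lt_or_gt_of_ne (fun h : (p:ℝ) = q => hpq (Subtype.ext h)) with h | h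
  · refine ⟨f '' Set.Icc p q, isArc_image_Icc hf p q h, ?_, ?_, ?_⟩
    · refine Set.Subset.trans (Set.image_mono (f := f) (key p q (hp ▸ ha) (hq ▸ hb))) ?_
      rw [Set.image_preimage_eq_inter_range]
      exact Set.inter_subset_left
    · exact ⟨p, ⟨le_refl p, le_of_lt (Subtype.coe_lt_coe.mp h)⟩, hp⟩
    · exact ⟨q, ⟨le_of_lt (Subtype.coe_lt_coe.mp h), le_refl q⟩, hq⟩
  · refine ⟨f '' Set.Icc q p, isArc_image_Icc hf q p h, ?_, ?_, ?_⟩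
    · refine Set.Subset.trans (Set.image_mono (f := f) (key q p (hq ▸ hb) (hp ▸ ha))) ?_
      rw [Set.image_preimage_eq_inter_range]
      exact Set.inter_subset_left
    · exact ⟨p, ⟨le_of_lt (Subtype.coe_lt_coe.mp h), le_refl p⟩, hp⟩
    · exact ⟨q, ⟨le_refl q, le_of_lt (Subtype.coe_lt_coe.mp h)⟩, hq⟩

/-- Let `K` be a non-degenerate chainable continuum and `x ∈ K` an
endpoint.  Then `x` is not contained in any (non-degenerate) arc of `K` if and only if
there is a nested decreasing sequence `(H i)` of non-degenerate subcontinua with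
`⋂ i, H i = {x}` such that `H i` is not arc-connected for all sufficiently large `i`. -/
theorem stmt1 {K : Type*} [MetricSpace K] [CompactSpace K] [ConnectedSpace K]
    [Nontrivial K]
    (hchain : ∀ ε > (0:ℝ), ∃ f : K → ℝ, Continuous f ∧ Set.range f = Set.Icc 0 1 ∧
      ∀ y : ℝ, Metric.diam (f ⁻¹' {y}) < ε)
    (x : K) (hx : IsEndpointPt x) :
    (∀ A : Set K, IsArc A → x ∉ A) ↔
      ∃ H : ℕ → Set K,
        (∀ i, IsCompact (H i) ∧ IsConnected (H i) ∧ ¬ (H i).Subsingleton) ∧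
        (∀ i, H (i + 1) ⊆ H i) ∧ (⋂ i, H i) = {x} ∧
        ∃ N, ∀ i ≥ N, ¬ ArcConnectedSet (H i) := by
  constructor
  · -- forward direction: build components of small closed balls
    intro hno
    obtain ⟨z, hz⟩ := exists_ne x
    have hd : 0 < dist z x := dist_pos.mpr hz
    set r : ℕ → ℝ := fun i => dist z x / (i + 2) with hr
    have hrpos : ∀ i, 0 < r i := fun i => div_pos hd (by positivity)
    have hranti : ∀ i, r (i + 1) ≤ r i := by
      intro i
      apply div_le_div_of_nonneg_left hd.le (by positivity)
      push_cast
      linarith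
    have hrlt : ∀ i, r i < dist z x := by
      intro i
      have h0 : (0:ℝ) ≤ (i : ℝ) := Nat.cast_nonneg i
      exact div_lt_self hd (by linarith)
    set F : ℕ → Set K := fun i => Metric.closedBall x (r i) with hF
    have hxF : ∀ i, x ∈ F i := fun i => Metric.mem_closedBall_self (hrpos i).le
    have hFc : ∀ i, IsClosed (F i) := fun i => Metric.isClosed_closedBall
    have hFne : ∀ i, (F i)ᶜ.Nonempty := by
      intro i
      refine ⟨z, fun h => ?_⟩
      exact absurd (Metric.mem_closedBall.mp h) (not_le.mpr (hrlt i))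
    set H : ℕ → Set K := fun i => connectedComponentIn (F i) x with hH
    have hxH : ∀ i, x ∈ H i := fun i => mem_connectedComponentIn (hxF i)
    -- a point far from x in each H i
    have hy : ∀ i, ∃ y ∈ H i, y ≠ x := by
      intro i
      obtain ⟨y, hy1, hy2⟩ := bump_aux (hFc i) (hxF i) (hFne i)
      refine ⟨y, hy1, ?_⟩
      have hsub : closure (F i)ᶜ ⊆ {w : K | r i ≤ dist w x} := by
        apply closure_minimal
        · intro w hw
          exact le_of_lt (not_le.mp (fun h => hw (Metric.mem_closedBall.mpr h)))
        · exact isClosed_le continuous_const (continuous_id.dist continuous_const)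
      have : r i ≤ dist y x := hsub hy2
      intro hyx
      rw [hyx, dist_self] at this
      exact absurd this (not_le.mpr (hrpos i))
    refine ⟨H, ?_, ?_, ?_, 0, ?_⟩
    · intro i
      refine ⟨isCompact_connectedComponentIn (hFc i) (hxF i),
        isConnected_connectedComponentIn_iff.mpr (hxF i), ?_⟩
      intro hs
      obtain ⟨y, hy1, hy2⟩ := hy i
      exact hy2 (hs hy1 (hxH i))
    · intro i
      exact connectedComponentIn_mono x (Metric.closedBall_subset_closedBall (hranti i))
    · apply Subset.antisymm
      · intro w hw
        have hdist : ∀ i, dist w x ≤ r i := by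
          intro i
          exact Metric.mem_closedBall.mp
            (connectedComponentIn_subset (F i) x (mem_iInter.mp hw i))
        have : dist w x ≤ 0 := by
          by_contra h
          push_neg at h
          obtain ⟨n, hn⟩ := exists_nat_gt (dist z x / dist w x)
          have h1 : dist z x < (n : ℝ) * dist w x := by
            rw [div_lt_iff₀ h] at hn
            linarith
          have h2 : r n < dist w x := by
            rw [hr]
            rw [div_lt_iff₀ (by positivity)]
            have h0 : (0:ℝ) ≤ (n : ℝ) := Nat.cast_nonneg n
            nlinarith
          exact absurd (hdist n) (not_le.mpr h2)
        simp only [mem_singleton_iff]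
        exact dist_le_zero.mp this
      · intro w hw
        rw [mem_singleton_iff] at hw
        subst hw
        exact mem_iInter.mpr fun i => hxH i
    · intro i _ hAC
      obtain ⟨y, hy1, hy2⟩ := hy i
      obtain ⟨A, hA, _, hxA, _⟩ := hAC x (hxH i) y hy1 (Ne.symm hy2)
      exact hno A hA hxA
  · -- backward direction
    rintro ⟨H, hprop, hmono, hint, N, hN⟩ A hA hxA
    obtain ⟨f, hf, rfl⟩ := hA
    haveI : CompactSpace (Set.Icc (0:ℝ) 1) := isCompact_iff_compactSpace.mp isCompact_Icc
    haveI : ConnectedSpace (Set.Icc (0:ℝ) 1) :=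
      Subtype.connectedSpace (isConnected_Icc (by norm_num))
    set p0 : Set.Icc (0:ℝ) 1 := ⟨0, by norm_num⟩ with hp0
    set p1 : Set.Icc (0:ℝ) 1 := ⟨1, by norm_num⟩ with hp1
    have hne : f p0 ≠ f p1 := by
      intro h
      have := hf.injective h
      rw [Subtype.ext_iff] at this
      norm_num [hp0, hp1] at this
    have hex : ∃ a ∈ Set.range f, a ≠ x := by
      by_cases h0 : f p0 = x
      · exact ⟨f p1, ⟨p1, rfl⟩, fun h => hne (by rw [h0, h])⟩
      · exact ⟨f p0, ⟨p0, rfl⟩, h0⟩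
    obtain ⟨a, haA, hax⟩ := hex
    have hanot : ∃ i₀, a ∉ H i₀ := by
      by_contra h
      push_neg at h
      have : a ∈ ⋂ i, H i := mem_iInter.mpr h
      rw [hint, mem_singleton_iff] at this
      exact hax this
    obtain ⟨i₀, hi₀⟩ := hanot
    have hHanti : Antitone H := antitone_nat_of_succ_le hmono
    set M := max N i₀ with hM
    have hxHM : x ∈ H M := by
      have : x ∈ ⋂ i, H i := by rw [hint]; exact mem_singleton x
      exact mem_iInter.mp this M
    have haM : a ∉ H M := fun h => hi₀ (hHanti (le_max_right N i₀) h)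
    obtain ⟨hc, hconn, _⟩ := hprop M
    rcases hx (Set.range f) (H M) (isCompact_range hf.continuous)
      (isConnected_range hf.continuous) hc hconn hxA hxHM with hsub | hsub
    · exact haM (hsub haA)
    · exact hN M (le_max_left _ _)
        (arcConnected_of_subset_arc hf hconn.isPreconnected hsub)
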